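/- Let I ⊆ ℝ be an open interval and f : I ∩ ℚ → ℝ a non-decreasing function satisfying the midpoint property, i.e. for all t, t' ∈ I ∩ ℚ one has (f(t)+f(t'))/2 ≥ f((t+t')/2). Then f extends to a continuous non-decreasing convex function g : I → ℝ. -/

import Mathlib

set_option maxHeartbeats 1000000

/-- **Extension of a midpoint-convex monotone function on rational points of an open
interval to a continuous, non-decreasing, convex function.**
`I ⊆ ℝ` is an open interval (open and order-connected), `f : ℚ → ℝ` is non-decreasing on the
rational points of `I` and satisfies the midpoint property there.  Then there is a function
`g : ℝ → ℝ`, continuous, non-decreasing and convex on `I`, extending `f`. -/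
theorem midpoint_extension (I : Set ℝ) (hIopen : IsOpen I) (hIconn : I.OrdConnected)
    (f : ℚ → ℝ)
    (hmono : ∀ t t' : ℚ, (t : ℝ) ∈ I → (t' : ℝ) ∈ I → t ≤ t' → f t ≤ f t')
    (hmid : ∀ t t' : ℚ, (t : ℝ) ∈ I → (t' : ℝ) ∈ I →
      f ((t + t') / 2) ≤ (f t + f t') / 2) :
    ∃ g : ℝ → ℝ, ContinuousOn g I ∧ MonotoneOn g I ∧ ConvexOn ℝ I g ∧
      ∀ t : ℚ, (t : ℝ) ∈ I → g t = f t := by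
  classical
  set S : ℝ → Set ℝ := fun x => (fun q : ℚ => f q) '' {q : ℚ | (q : ℝ) ∈ I ∧ (q : ℝ) ≤ x}
    with hSdef
  set g : ℝ → ℝ := fun x => sSup (S x) with hgdef
  have hopen : ∀ x ∈ I, ∃ δ > 0, Set.Ioo (x - δ) (x + δ) ⊆ I := by
    intro x hx
    obtain ⟨δ, hδ, hball⟩ := Metric.isOpen_iff.1 hIopen x hx
    exact ⟨δ, hδ, by rwa [← Real.ball_eq_Ioo]⟩
  have hne : ∀ x ∈ I, (S x).Nonempty := by
    intro x hx
    obtain ⟨δ, hδ, hsub⟩ := hopen x hx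
    obtain ⟨q, hq1, hq2⟩ := exists_rat_btwn (show x - δ < x by linarith)
    exact ⟨f q, ⟨q, ⟨hsub ⟨hq1, by linarith⟩, hq2.le⟩, rfl⟩⟩
  have hbdd : ∀ x ∈ I, BddAbove (S x) := by
    intro x hx
    obtain ⟨δ, hδ, hsub⟩ := hopen x hx
    obtain ⟨r0, h1, h2⟩ := exists_rat_btwn (show x < x + δ by linarith)
    refine ⟨f r0, ?_⟩
    rintro v ⟨q, ⟨hqI, hqx⟩, rfl⟩
    exact hmono q r0 hqI (hsub ⟨by linarith, h2⟩)
      (by exact_mod_cast (hqx.trans h1.le))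
  have hfg : ∀ (q : ℚ), (q : ℝ) ∈ I → ∀ x ∈ I, (q : ℝ) ≤ x → f q ≤ g x := by
    intro q hq x hx hqx
    exact le_csSup (hbdd x hx) ⟨q, ⟨hq, hqx⟩, rfl⟩
  have hg_le : ∀ x ∈ I, ∀ c : ℝ, (∀ q : ℚ, (q : ℝ) ∈ I → (q : ℝ) ≤ x → f q ≤ c) → g x ≤ c := by
    intro x hx c hc
    refine csSup_le (hne x hx) ?_
    rintro v ⟨q, ⟨hqI, hqx⟩, rfl⟩
    exact hc q hqI hqx
  have hgmono : MonotoneOn g I := by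
    intro x hx y hy hxy
    exact hg_le x hx (g y) (fun q hq hqx => hfg q hq y hy (hqx.trans hxy))
  have hgrat : ∀ t : ℚ, (t : ℝ) ∈ I → g t = f t := by
    intro t ht
    refine le_antisymm (hg_le _ ht _ ?_) (hfg t ht t ht le_rfl)
    intro q hq hqt
    exact hmono q t hq ht (by exact_mod_cast hqt)
  clear_value g S
  -- dyadic Jensen inequality
  have hdy : ∀ p r : ℚ, (p : ℝ) ∈ I → (r : ℝ) ∈ I → p ≤ r → ∀ n k : ℕ, k ≤ 2 ^ n →
      f (((k : ℚ) * p + ((2 ^ n : ℚ) - k) * r) / 2 ^ n) ≤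
        ((k : ℝ) * f p + ((2 ^ n : ℝ) - k) * f r) / 2 ^ n := by
    intro p r hp hr hpr
    have hmemd : ∀ n k : ℕ, k ≤ 2 ^ n →
        ((((k : ℚ) * p + ((2 ^ n : ℚ) - k) * r) / 2 ^ n : ℚ) : ℝ) ∈ I := by
      intro n k hk
      have hk' : (k : ℚ) ≤ 2 ^ n := by exact_mod_cast hk
      have h2 : (0 : ℚ) < 2 ^ n := by positivity
      have h1 : p ≤ ((k : ℚ) * p + ((2 ^ n : ℚ) - k) * r) / 2 ^ n := by
        rw [le_div_iff₀ h2]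
        linarith only [mul_nonneg (sub_nonneg.2 hk') (sub_nonneg.2 hpr)]
      have h2' : ((k : ℚ) * p + ((2 ^ n : ℚ) - k) * r) / 2 ^ n ≤ r := by
        rw [div_le_iff₀ h2]
        linarith only [mul_nonneg (show (0:ℚ) ≤ (k:ℚ) by positivity) (sub_nonneg.2 hpr)]
      exact hIconn.out hp hr ⟨by exact_mod_cast h1, by exact_mod_cast h2'⟩
    intro n
    induction n with
    | zero =>
      intro k hk
      interval_cases k
      · simp
      · simp
    | succ n ih =>
      intro k hk
      have h2n : (0 : ℝ) < 2 ^ n := by positivity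
      by_cases hk2 : k ≤ 2 ^ n
      · have key := hmid (((k : ℚ) * p + ((2 ^ n : ℚ) - k) * r) / 2 ^ n) r (hmemd n k hk2) hr
        have ihk := ih k hk2
        have harg : ((((k : ℚ) * p + ((2 ^ n : ℚ) - k) * r) / 2 ^ n) + r) / 2 =
            ((k : ℚ) * p + ((2 ^ (n + 1) : ℚ) - k) * r) / 2 ^ (n + 1) := by
          field_simp
          ring
        rw [harg] at key
        have ihk' : f (((k : ℚ) * p + ((2 ^ n : ℚ) - k) * r) / 2 ^ n) * 2 ^ n ≤
            (k : ℝ) * f p + ((2 ^ n : ℝ) - k) * f r := by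
          rw [← le_div_iff₀ h2n]; exact ihk
        have hp2 : (2:ℝ) ^ (n+1) = 2 * 2 ^ n := by ring
        rw [le_div_iff₀ (show (0:ℝ) < 2 ^ (n+1) by positivity), hp2]
        linarith [mul_le_mul_of_nonneg_right key (le_of_lt h2n)]
      · push_neg at hk2
        set j := k - 2 ^ n with hjdef
        have hjk : k = 2 ^ n + j := by omega
        have hj : j ≤ 2 ^ n := by
          have : k ≤ 2 ^ (n + 1) := hk
          omega
        have key := hmid p (((j : ℚ) * p + ((2 ^ n : ℚ) - j) * r) / 2 ^ n) hp (hmemd n j hj)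
        have ihj := ih j hj
        have harg : (p + (((j : ℚ) * p + ((2 ^ n : ℚ) - j) * r) / 2 ^ n)) / 2 =
            ((k : ℚ) * p + ((2 ^ (n + 1) : ℚ) - k) * r) / 2 ^ (n + 1) := by
          have : (k : ℚ) = 2 ^ n + (j : ℚ) := by exact_mod_cast hjk
          rw [this]
          field_simp
          ring
        rw [harg] at key
        have ihj' : f (((j : ℚ) * p + ((2 ^ n : ℚ) - j) * r) / 2 ^ n) * 2 ^ n ≤
            (j : ℝ) * f p + ((2 ^ n : ℝ) - j) * f r := by
          rw [← le_div_iff₀ h2n]; exact ihj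
        have hkr : (k : ℝ) = 2 ^ n + (j : ℝ) := by exact_mod_cast hjk
        have hp2 : (2:ℝ) ^ (n+1) = 2 * 2 ^ n := by ring
        rw [le_div_iff₀ (show (0:ℝ) < 2 ^ (n+1) by positivity), hkr, hp2]
        linarith [mul_le_mul_of_nonneg_right key (le_of_lt h2n)]
  -- dyadic density
  have hdyadic : ∀ (β : ℝ) (μ : ℚ), 0 ≤ β → β < (μ : ℝ) → (μ : ℝ) ≤ 1 →
      ∃ n k : ℕ, k ≤ 2 ^ n ∧ β < (k : ℝ) / 2 ^ n ∧ ((k : ℚ) / 2 ^ n ≤ μ) := by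
    intro β μ hβ0 hβμ hμ1
    obtain ⟨n, hn⟩ := exists_pow_lt_of_lt_one (show (0:ℝ) < (μ:ℝ) - β by linarith)
      (show (1:ℝ)/2 < 1 by norm_num)
    have h2n : (0 : ℝ) < 2 ^ n := by positivity
    have hn' : 1 / (2:ℝ) ^ n < (μ:ℝ) - β := by
      rwa [div_pow, one_pow] at hn
    have hμ0 : (0:ℝ) ≤ (μ:ℝ) := le_trans hβ0 hβμ.le
    set k := ⌊(μ : ℝ) * 2 ^ n⌋₊ with hkdef
    have hk1 : (k : ℝ) ≤ (μ:ℝ) * 2 ^ n := Nat.floor_le (by positivity)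
    have hk2 : (μ:ℝ) * 2 ^ n < k + 1 := Nat.lt_floor_add_one _
    have hkle : k ≤ 2 ^ n := by
      have : (k : ℝ) ≤ (2:ℝ) ^ n :=
        le_trans hk1 (by linarith only [mul_le_mul_of_nonneg_right hμ1 h2n.le])
      exact_mod_cast (by push_cast; exact this : (k:ℝ) ≤ ((2 ^ n : ℕ) : ℝ))
    refine ⟨n, k, hkle, ?_, ?_⟩
    · rw [lt_div_iff₀ h2n]
      have hcancel : (1 / (2:ℝ) ^ n) * 2 ^ n = 1 := by field_simp
      linarith only [mul_lt_mul_of_pos_right hn' h2n, hcancel, hk2]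
    · rw [div_le_iff₀ (show (0:ℚ) < 2 ^ n by positivity)]
      exact_mod_cast hk1
  -- the key convexity estimate
  have hkey : ∀ x y : ℝ, x ∈ I → y ∈ I → x < y → ∀ a b : ℝ, 0 < a → 0 < b → a + b = 1 →
      ∀ q : ℚ, (q : ℝ) ∈ I → (q : ℝ) ≤ a * x + b * y → f q ≤ a * g x + b * g y := by
    intro x y hx hy hxy a b ha hb hab q hqI hqz
    have hgxy : g x ≤ g y := hgmono hx hy hxy.le
    rcases le_or_gt (q : ℝ) x with hqx | hxq
    · have h1 : f q ≤ g x := hfg q hqI x hx hqx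
      have e : a * g x + b * g x = g x := by linear_combination (g x) * hab
      linarith [mul_nonneg hb.le (sub_nonneg.2 hgxy)]
    · have hεforall : ∀ ε : ℝ, 0 < ε → f q ≤ a * g x + b * g y + ε := by
        intro ε hε
        obtain ⟨δ₀, hδ₀, hsub⟩ := hopen x hx
        set z := a * x + b * y with hz
        have hyx : (0:ℝ) < y - x := by linarith
        have ey : a * y + b * y = y := by linear_combination y * hab
        have hzy : z < y := by
          have := mul_pos ha hyx
          simp only [hz]
          linarith
        have hxz : x < z := lt_of_lt_of_le hxq hqz
        set C := g y - g x with hCdef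
        have hC0 : 0 ≤ C := by simp [hCdef]; linarith
        set δ := min δ₀ (min (y - z) (ε * (y - x) / (C + 1))) with hδdef
        have hδpos : 0 < δ := by
          refine lt_min hδ₀ (lt_min (by linarith) (by positivity))
        have hδ1 : δ ≤ δ₀ := min_le_left _ _
        have hδ2 : δ ≤ y - z := le_trans (min_le_right _ _) (min_le_left _ _)
        have hδ3 : δ ≤ ε * (y - x) / (C + 1) :=
          le_trans (min_le_right _ _) (min_le_right _ _)
        obtain ⟨p, hp1, hp2⟩ := exists_rat_btwn (show x - δ < x by linarith)
        have hpI : (p : ℝ) ∈ I := hsub ⟨by linarith, by linarith⟩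
        obtain ⟨r, hr1, hr2⟩ := exists_rat_btwn
          (show max (y - δ) z < y from max_lt (by linarith) hzy)
        have hrz : z < (r : ℝ) := lt_of_le_of_lt (le_max_right _ _) hr1
        have hry : y - δ < (r : ℝ) := lt_of_le_of_lt (le_max_left _ _) hr1
        have hrI : (r : ℝ) ∈ I := hIconn.out hx hy ⟨by linarith, hr2.le⟩
        have hpq : (p : ℝ) < q := lt_trans hp2 hxq
        have hqr : (q : ℝ) < r := lt_of_le_of_lt hqz hrz
        have hpr : (p : ℝ) < r := lt_trans hpq hqr
        have hrp : (0:ℝ) < (r : ℝ) - p := by linarith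
        set μ : ℚ := (r - q) / (r - p) with hμdef
        have hμR : (μ : ℝ) = ((r:ℝ) - q) / ((r:ℝ) - p) := by push_cast [hμdef]; ring
        have hμpos : (0:ℝ) < (μ:ℝ) := by
          rw [hμR]
          apply div_pos <;> linarith
        have hμle1 : (μ : ℝ) ≤ 1 := by
          rw [hμR, div_le_one hrp]
          linarith
        set lam : ℝ := (a * (y - x) - δ) / (y - x) with hlamdef
        have e1 : a * (y - x) = y - z := by
          simp only [hz]; linear_combination y * hab
        have hlamlt : lam < (μ : ℝ) := by
          rw [hlamdef, hμR, div_lt_div_iff₀ hyx hrp, e1]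
          linarith only [mul_nonneg (sub_nonneg.2 hqz) hyx.le,
            mul_pos (show (0:ℝ) < (r:ℝ) - y + δ by linarith)
              (show (0:ℝ) < z - x + δ by linarith),
            mul_nonneg (show (0:ℝ) ≤ y - z - δ by linarith)
              (show (0:ℝ) ≤ (p:ℝ) - x + δ by linarith)]
        set β : ℝ := max lam 0 with hβdef
        have hβμ : β < (μ : ℝ) := max_lt hlamlt hμpos
        obtain ⟨n, k, hkn, hβd, hdμ⟩ := hdyadic β μ (le_max_right _ _) hβμ hμle1
        have h2nQ : (0:ℚ) < 2 ^ n := by positivity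
        have h2nR : (0:ℝ) < (2:ℝ) ^ n := by positivity
        set D : ℝ := (k : ℝ) / 2 ^ n with hDdef
        have hD0 : 0 ≤ D := by positivity
        have hDμ : D ≤ (μ : ℝ) := by
          rw [hDdef, div_le_iff₀ h2nR]
          exact_mod_cast (div_le_iff₀ h2nQ).1 hdμ
        have hD1 : D ≤ 1 := le_trans hDμ hμle1
        -- the dyadic point
        set q' : ℚ := ((k : ℚ) * p + ((2 ^ n : ℚ) - k) * r) / 2 ^ n with hq'def
        have hq'I : ((q' : ℚ) : ℝ) ∈ I := by
          have hk' : (k : ℚ) ≤ 2 ^ n := by exact_mod_cast hkn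
          have h1 : p ≤ q' := by
            rw [hq'def, le_div_iff₀ h2nQ]
            linarith only [mul_nonneg (sub_nonneg.2 hk')
              (sub_nonneg.2 (show p ≤ r by exact_mod_cast hpr.le))]
          have h2 : q' ≤ r := by
            rw [hq'def, div_le_iff₀ h2nQ]
            linarith only [mul_nonneg (show (0:ℚ) ≤ (k:ℚ) by positivity)
              (sub_nonneg.2 (show p ≤ r by exact_mod_cast hpr.le))]
          exact hIconn.out hpI hrI ⟨by exact_mod_cast h1, by exact_mod_cast h2⟩
        have hqq' : q ≤ q' := by
          -- q' = r - D (r - p) ≥ r - μ (r - p) = q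
          have hq'R : ((q' : ℚ) : ℝ) = D * p + (1 - D) * r := by
            rw [hq'def, hDdef]
            push_cast
            field_simp
          have hμeq : (μ : ℝ) * ((r:ℝ) - p) = (r:ℝ) - q := by
            rw [hμR]
            field_simp
          have : (q : ℝ) ≤ ((q' : ℚ) : ℝ) := by
            rw [hq'R]
            linarith only [mul_le_mul_of_nonneg_right hDμ hrp.le, hμeq]
          exact_mod_cast this
        have hfq' : f q ≤ f q' := hmono q q' hqI hq'I hqq'
        have hjensen := hdy p r hpI hrI (by exact_mod_cast hpr.le) n k hkn
        have hfq'2 : f q' ≤ D * f p + (1 - D) * f r := by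
          rw [hq'def]
          refine le_trans hjensen (le_of_eq ?_)
          rw [hDdef]
          field_simp
        have hfp : f p ≤ g x := hfg p hpI x hx hp2.le
        have hfr : f r ≤ g y := hfg r hrI y hy hr2.le
        have hstep : f q ≤ D * g x + (1 - D) * g y := by
          have h1 := mul_le_mul_of_nonneg_left hfp hD0
          have h2 := mul_le_mul_of_nonneg_left hfr (by linarith : (0:ℝ) ≤ 1 - D)
          linarith
        -- convert to the target with error ε
        have hlamD : lam < D := lt_of_le_of_lt (le_max_left _ _) hβd
        have hlameq : lam * (y - x) = a * (y - x) - δ := by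
          rw [hlamdef]
          field_simp
        have hG1 : (a - D) * (y - x) ≤ δ := by
          linarith only [hlameq, mul_le_mul_of_nonneg_right hlamD.le hyx.le]
        have hδ3' : δ * (C + 1) ≤ ε * (y - x) := by
          rw [hδdef]
          have h := hδ3
          rw [le_div_iff₀ (show (0:ℝ) < C + 1 by linarith)] at h
          exact h
        have hfinal : (a - D) * C ≤ ε := by
          have h5 : ((a - D) * C) * (y - x) < ε * (y - x) := by
            linarith only [mul_le_mul_of_nonneg_right hG1 hC0, hδ3', hδpos]
          exact ((mul_lt_mul_iff_of_pos_right hyx).mp h5).le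
        have hCeq : g y - g x = C := by rw [hCdef]
        have hfinal' : (a - D) * (g y - g x) ≤ ε := by rw [hCeq]; exact hfinal
        have egy : a * g y + b * g y = g y := by linear_combination (g y) * hab
        linarith only [hstep, hfinal', egy]
      by_contra hcon
      push_neg at hcon
      have := hεforall ((f q - (a * g x + b * g y)) / 2) (by linarith)
      linarith
  -- assemble
  have hconvI : Convex ℝ I := convex_iff_ordConnected.mpr hIconn
  have hconv : ConvexOn ℝ I g := by
    refine ⟨hconvI, ?_⟩
    intro x hx y hy a b ha hb hab
    simp only [smul_eq_mul]
    rcases eq_or_lt_of_le ha with ha0 | ha'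
    · have hb1 : b = 1 := by linarith
      rw [← ha0, hb1]
      simp
    rcases eq_or_lt_of_le hb with hb0 | hb'
    · have ha1 : a = 1 := by linarith
      rw [← hb0, ha1]
      simp
    have ex1 : a * x + b * x = x := by linear_combination x * hab
    have ey1 : a * y + b * y = y := by linear_combination y * hab
    rcases lt_trichotomy x y with h | h | h
    · have hz : a * x + b * y ∈ I := hIconn.out hx hy
        ⟨by linarith only [ex1, mul_nonneg hb (sub_nonneg.2 h.le)],
         by linarith only [ey1, mul_nonneg ha (sub_nonneg.2 h.le)]⟩
      exact hg_le _ hz _ (fun q hq hqz => hkey x y hx hy h a b ha' hb' hab q hq hqz)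
    · have e : a * x + b * y = x := by rw [← h]; linear_combination x * hab
      rw [e, ← h]
      have : a * g x + b * g x = g x := by linear_combination (g x) * hab
      linarith
    · have hz : a * x + b * y ∈ I := hIconn.out hy hx
        ⟨by linarith only [ey1, mul_nonneg ha (sub_nonneg.2 h.le)],
         by linarith only [ex1, mul_nonneg hb (sub_nonneg.2 h.le)]⟩
      refine hg_le _ hz _ (fun q hq hqz => ?_)
      have := hkey y x hy hx h b a hb' ha' (by linarith) q hq (by linarith)
      linarith
  exact ⟨g, hconv.continuousOn hIopen, hgmono, hconv, hgrat⟩
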